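/- Let V be a type of propositional variables and t ∉ V a fresh variable. Let H be a finite set of functions η : (V → Bool) → Bool → Bool, where the second argument represents the value substituted for a placeholder constant. Define the knowledge base Γ_⊤ := { σ ↦ η σ true : η ∈ H } over V (each placeholder read as ⊤), and the knowledge base Γ_t := { σ' ↦ η (σ' restricted to V) (σ' t) : η ∈ H } ∪ { σ' ↦ σ' t } over V ⊎ {t} (each placeholder read as the variable t, plus the unit formula t). Let A ⊆ V and let φ be a formula over V, extended to V ⊎ {t} by ignoring t. Then for every set E of literals over A: E is an explanation for (Γ_⊤, A, φ) if and only if E is an explanation for (Γ_t, A, φ). In particular, (Γ_⊤, A, φ) has an explanation iff (Γ_t, A, φ) has one, and (Γ_⊤, A, φ) has a positive explanation iff (Γ_t, A, φ) has one. -/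

import Mathlib

/-- `σ` satisfies the knowledge base `Γ` (a set of formulas, each a Boolean function
on assignments). -/
def SatKB {V : Type*} (Γ : Set ((V → Bool) → Bool)) (σ : V → Bool) : Prop :=
  ∀ γ ∈ Γ, γ σ = true

/-- `σ` satisfies the set of literals given by positive part `P` and negative part `N`. -/
def SatLits {V : Type*} (σ : V → Bool) (P N : Set V) : Prop :=
  (∀ x ∈ P, σ x = true) ∧ (∀ x ∈ N, σ x = false)

/-- `(P, N)` is an explanation for the abduction instance `(Γ, A, φ)`. -/
def IsExplanation {V : Type*} (Γ : Set ((V → Bool) → Bool)) (A : Set V)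
    (φ : (V → Bool) → Bool) (P N : Set V) : Prop :=
  P ⊆ A ∧ N ⊆ A ∧ Disjoint P N ∧
    (∃ σ, SatKB Γ σ ∧ SatLits σ P N) ∧
    (∀ σ, SatKB Γ σ → SatLits σ P N → φ σ = true)

/-- Replacing the constant `⊤` (second argument of each `η ∈ H`) by a fresh variable `t`
(modelled as `none : Option V`) together with the unit formula `t` preserves, literal set
by literal set, the explanations of the abduction instance; in particular existence of
explanations and of positive explanations is preserved. -/
theorem stmt_0 (V : Type*) (H : Set ((V → Bool) → Bool → Bool)) (hH : H.Finite)
    (A : Set V) (φ : (V → Bool) → Bool) :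
    let ΓT : Set ((V → Bool) → Bool) := (fun η : (V → Bool) → Bool → Bool =>
      fun σ : V → Bool => η σ true) '' H
    let Γt : Set ((Option V → Bool) → Bool) :=
      ((fun η : (V → Bool) → Bool → Bool =>
          fun σ' : Option V → Bool => η (fun v => σ' (some v)) (σ' none)) '' H) ∪
        {fun σ' : Option V → Bool => σ' none}
    let φ' : (Option V → Bool) → Bool := fun σ' => φ (fun v => σ' (some v))
    (∀ P N : Set V,
        IsExplanation ΓT A φ P N ↔
          IsExplanation Γt (some '' A) φ' (some '' P) (some '' N)) ∧
    ((∃ P N : Set V, IsExplanation ΓT A φ P N) ↔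
        (∃ P' N' : Set (Option V), IsExplanation Γt (some '' A) φ' P' N')) ∧
    ((∃ P : Set V, IsExplanation ΓT A φ P ∅) ↔
        (∃ P' : Set (Option V), IsExplanation Γt (some '' A) φ' P' ∅)) := by
  intro ΓT Γt φ'
  have hKB1 : ∀ σ' : Option V → Bool, SatKB Γt σ' →
      SatKB ΓT (fun v => σ' (some v)) ∧ σ' none = true := by
    intro σ' h
    have ht : σ' none = true := h _ (Or.inr rfl)
    refine ⟨?_, ht⟩
    rintro γ ⟨η, hη, rfl⟩
    have := h _ (Or.inl ⟨η, hη, rfl⟩)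
    simpa [ht] using this
  have hKB2 : ∀ σ : V → Bool, SatKB ΓT σ → SatKB Γt (fun o => o.elim true σ) := by
    intro σ h γ hγ
    rcases hγ with ⟨η, hη, rfl⟩ | hγ
    · simpa using h _ ⟨η, hη, rfl⟩
    · simp only [Set.mem_singleton_iff] at hγ
      subst hγ
      rfl
  have hLits : ∀ (σ' : Option V → Bool) (P N : Set V),
      SatLits σ' (some '' P) (some '' N) ↔ SatLits (fun v => σ' (some v)) P N := by
    intro σ' P N
    constructor
    · rintro ⟨h1, h2⟩
      exact ⟨fun x hx => h1 _ ⟨x, hx, rfl⟩, fun x hx => h2 _ ⟨x, hx, rfl⟩⟩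
    · rintro ⟨h1, h2⟩
      constructor
      · rintro _ ⟨x, hx, rfl⟩; exact h1 x hx
      · rintro _ ⟨x, hx, rfl⟩; exact h2 x hx
  have key : ∀ P N : Set V, IsExplanation ΓT A φ P N ↔
      IsExplanation Γt (some '' A) φ' (some '' P) (some '' N) := by
    intro P N
    constructor
    · rintro ⟨hPA, hNA, hdisj, ⟨σ, hσKB, hσL⟩, hent⟩
      refine ⟨Set.image_mono hPA, Set.image_mono hNA,
        (Set.disjoint_image_iff (Option.some_injective V)).2 hdisj, ?_, ?_⟩
      · refine ⟨fun o => o.elim true σ, hKB2 σ hσKB, ?_⟩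
        exact (hLits _ P N).2 hσL
      · intro σ' hKB hL
        obtain ⟨hKB', _⟩ := hKB1 σ' hKB
        exact hent _ hKB' ((hLits σ' P N).1 hL)
    · rintro ⟨hPA, hNA, hdisj, ⟨σ', hσKB, hσL⟩, hent⟩
      refine ⟨?_, ?_, ?_, ?_, ?_⟩
      · intro x hx
        obtain ⟨y, hy, hxy⟩ := hPA ⟨x, hx, rfl⟩
        rwa [Option.some_injective V hxy.symm]
      · intro x hx
        obtain ⟨y, hy, hxy⟩ := hNA ⟨x, hx, rfl⟩
        rwa [Option.some_injective V hxy.symm]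
      · exact (Set.disjoint_image_iff (Option.some_injective V)).1 hdisj
      · exact ⟨fun v => σ' (some v), (hKB1 σ' hσKB).1, (hLits σ' P N).1 hσL⟩
      · intro σ hKB hL
        exact hent (fun o => o.elim true σ) (hKB2 σ hKB) ((hLits _ P N).2 hL)
  refine ⟨key, ?_, ?_⟩
  · constructor
    · rintro ⟨P, N, h⟩
      exact ⟨some '' P, some '' N, (key P N).1 h⟩
    · rintro ⟨P', N', h⟩
      have hrange : some '' A ⊆ Set.range (some : V → Option V) :=
        Set.image_subset_range _ _
      have hP : some '' (some ⁻¹' P') = P' :=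
        Set.image_preimage_eq_of_subset (h.1.trans hrange)
      have hN : some '' (some ⁻¹' N') = N' :=
        Set.image_preimage_eq_of_subset (h.2.1.trans hrange)
      refine ⟨some ⁻¹' P', some ⁻¹' N', (key _ _).2 ?_⟩
      rwa [hP, hN]
  · constructor
    · rintro ⟨P, h⟩
      refine ⟨some '' P, ?_⟩
      have := (key P ∅).1 h
      rwa [Set.image_empty] at this
    · rintro ⟨P', h⟩
      have hrange : some '' A ⊆ Set.range (some : V → Option V) :=
        Set.image_subset_range _ _
      have hP : some '' (some ⁻¹' P') = P' :=
        Set.image_preimage_eq_of_subset (h.1.trans hrange)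
      refine ⟨some ⁻¹' P', ?_⟩
      have := (key (some ⁻¹' P') ∅).2 ?_
      · exact this
      · rwa [hP, Set.image_empty]
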